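/- Let F : ℝ → ℂ be defined by F(x) = ∫_{{(ξ₁,ξ₂,ξ₃) : −1<ξ₁<ξ₂<ξ₃<1}} e^{2πix(ξ₁+ξ₂−2ξ₃)} dξ₁dξ₂dξ₃. Then for every r with 0 < r ≤ 1/2, F does not belong to L^r(ℝ), i.e. ∫_ℝ |F(x)|^r dx = ∞. -/

import Mathlib

open MeasureTheory

section Aux

lemma int_one_exp (c1 k1 : ℂ) (hk1 : k1 ≠ 0) {p q : ℝ} (h : p ≤ q) :
    ∫ x in Set.Ioo p q, c1 * Complex.exp (k1 * x) =
      c1 * (Complex.exp (k1 * q) - Complex.exp (k1 * p)) / k1 := by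
  rw [← MeasureTheory.integral_Ioc_eq_integral_Ioo, ← intervalIntegral.integral_of_le h,
    intervalIntegral.integral_const_mul, integral_exp_mul_complex hk1, mul_div_assoc]

lemma integrableOn_exp_Ioo (c1 k1 : ℂ) (p q : ℝ) :
    IntegrableOn (fun x : ℝ => c1 * Complex.exp (k1 * x)) (Set.Ioo p q) :=
  (Continuous.integrableOn_Icc (by continuity)).mono_set Set.Ioo_subset_Icc_self

lemma int_two_exp (c0 c1 c2 k1 k2 : ℂ) (hk1 : k1 ≠ 0) (hk2 : k2 ≠ 0) {p q : ℝ} (h : p ≤ q) :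
    ∫ x in Set.Ioo p q, (c0 + c1 * Complex.exp (k1 * x) + c2 * Complex.exp (k2 * x)) =
      c0 * (q - p) + c1 * (Complex.exp (k1 * q) - Complex.exp (k1 * p)) / k1
        + c2 * (Complex.exp (k2 * q) - Complex.exp (k2 * p)) / k2 := by
  have h0 : IntegrableOn (fun _ : ℝ => c0) (Set.Ioo p q) :=
    integrableOn_const measure_Ioo_lt_top.ne
  have h1 : IntegrableOn (fun x : ℝ => c0 + c1 * Complex.exp (k1 * x)) (Set.Ioo p q) :=
    h0.add (integrableOn_exp_Ioo c1 k1 p q)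
  rw [integral_add h1 (integrableOn_exp_Ioo c2 k2 p q),
    integral_add h0 (integrableOn_exp_Ioo c1 k1 p q),
    int_one_exp c1 k1 hk1 h, int_one_exp c2 k2 hk2 h, setIntegral_const, measureReal_def, Real.volume_Ioo,
    ENNReal.toReal_ofReal (by linarith), Complex.real_smul]
  push_cast
  ring

lemma id1 (u : ℂ) (hu : u ≠ 0) (a b : ℝ) :
    Complex.exp (u*((a:ℂ)+(b:ℂ))) * (Complex.exp ((-(2*u))*((1:ℝ):ℂ)) - Complex.exp ((-(2*u))*(b:ℂ))) / (-(2*u))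
    = 0 + (Complex.exp (u*(a:ℂ))/(2*u)) * Complex.exp ((-u)*(b:ℂ))
      + (-(Complex.exp (u*(a:ℂ))*Complex.exp (-(2*u)))/(2*u)) * Complex.exp (u*(b:ℂ)) := by
  have m1 : Complex.exp (u*((a:ℂ)+(b:ℂ))) * Complex.exp ((-(2*u))*(b:ℂ))
      = Complex.exp (u*(a:ℂ)) * Complex.exp ((-u)*(b:ℂ)) := by
    rw [← Complex.exp_add, ← Complex.exp_add]; congr 1; ring
  have m2 : Complex.exp (u*((a:ℂ)+(b:ℂ))) * Complex.exp ((-(2*u))*((1:ℝ):ℂ))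
      = Complex.exp (u*(a:ℂ)) * Complex.exp (-(2*u)) * Complex.exp (u*(b:ℂ)) := by
    rw [← Complex.exp_add, ← Complex.exp_add, ← Complex.exp_add]; congr 1
    push_cast; ring
  linear_combination (1/(2*u)) * m1 - (1/(2*u)) * m2

lemma id2 (u : ℂ) (hu : u ≠ 0) (a : ℝ) :
    0 * (((1:ℝ):ℂ) - ((a:ℝ):ℂ)) + (Complex.exp (u*(a:ℂ))/(2*u)) * (Complex.exp ((-u)*((1:ℝ):ℂ)) - Complex.exp ((-u)*(a:ℂ))) / (-u)
      + (-(Complex.exp (u*(a:ℂ))*Complex.exp (-(2*u)))/(2*u)) * (Complex.exp (u*((1:ℝ):ℂ)) - Complex.exp (u*(a:ℂ))) / u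
    = 1/(2*u^2) + (-(Complex.exp (-u))/(u^2)) * Complex.exp (u*(a:ℂ))
      + (Complex.exp (-(2*u))/(2*u^2)) * Complex.exp ((2*u)*(a:ℂ)) := by
  have n1 : Complex.exp (u*(a:ℂ)) * Complex.exp ((-u)*(a:ℂ)) = 1 := by
    rw [← Complex.exp_add, show u*(a:ℂ) + (-u)*(a:ℂ) = 0 by ring, Complex.exp_zero]
  have n2 : Complex.exp (u*(a:ℂ)) * Complex.exp (-(2*u)) * Complex.exp (u*(a:ℂ))
      = Complex.exp (-(2*u)) * Complex.exp ((2*u)*(a:ℂ)) := by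
    rw [← Complex.exp_add, ← Complex.exp_add, ← Complex.exp_add]; congr 1; ring
  have n3 : Complex.exp (u*(a:ℂ)) * Complex.exp (-(2*u)) * Complex.exp (u*((1:ℝ):ℂ))
      = Complex.exp (-u) * Complex.exp (u*(a:ℂ)) := by
    rw [← Complex.exp_add, ← Complex.exp_add, ← Complex.exp_add]; congr 1
    push_cast; ring
  rw [show Complex.exp ((-u)*((1:ℝ):ℂ)) = Complex.exp (-u) from by norm_num]
  linear_combination (1/(2*u^2)) * n1 + (1/(2*u^2)) * n2 - (1/(2*u^2)) * n3

lemma id3 (u : ℂ) (hu : u ≠ 0) :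
    (1/(2*u^2)) * (((1:ℝ):ℂ) - ((-1:ℝ):ℂ)) + (-(Complex.exp (-u))/(u^2)) * (Complex.exp (u*((1:ℝ):ℂ)) - Complex.exp (u*((-1:ℝ):ℂ))) / u
      + (Complex.exp (-(2*u))/(2*u^2)) * (Complex.exp ((2*u)*((1:ℝ):ℂ)) - Complex.exp ((2*u)*((-1:ℝ):ℂ))) / (2*u)
    = 1/u^2 + (-3 + 4*Complex.exp (-(2*u)) - Complex.exp (-(4*u)))/(4*u^3) := by
  have p1 : Complex.exp (-u) * Complex.exp (u*((1:ℝ):ℂ)) = 1 := by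
    rw [← Complex.exp_add, show -u + u*((1:ℝ):ℂ) = 0 by push_cast; ring, Complex.exp_zero]
  have p2 : Complex.exp (-u) * Complex.exp (u*((-1:ℝ):ℂ)) = Complex.exp (-(2*u)) := by
    rw [← Complex.exp_add]; congr 1; push_cast; ring
  have p3 : Complex.exp (-(2*u)) * Complex.exp ((2*u)*((1:ℝ):ℂ)) = 1 := by
    rw [← Complex.exp_add, show -(2*u) + (2*u)*((1:ℝ):ℂ) = 0 by push_cast; ring, Complex.exp_zero]
  have p4 : Complex.exp (-(2*u)) * Complex.exp ((2*u)*((-1:ℝ):ℂ)) = Complex.exp (-(4*u)) := by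
    rw [← Complex.exp_add]; congr 1; push_cast; ring
  have c : (((1:ℝ):ℂ) - ((-1:ℝ):ℂ)) = 2 := by push_cast; ring
  rw [c]
  linear_combination (-(1/u^3)) * p1 + (1/u^3) * p2 + (1/(4*u^3)) * p3 - (1/(4*u^3)) * p4

end Aux

lemma iter (u : ℂ) (hnorm : ∀ w : ℝ, ‖Complex.exp (u * w)‖ = 1) :
    (∫ ξ in {p : ℝ × ℝ × ℝ | -1 < p.1 ∧ p.1 < p.2.1 ∧ p.2.1 < p.2.2 ∧ p.2.2 < 1},
      Complex.exp (u * ((ξ.1 : ℂ) + (ξ.2.1 : ℂ) - 2 * (ξ.2.2 : ℂ)))) =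
    ∫ a in Set.Ioo (-1:ℝ) 1, ∫ b in Set.Ioo a 1, ∫ c in Set.Ioo b 1,
      Complex.exp (u * ((a : ℂ) + (b : ℂ) - 2 * (c : ℂ))) := by
  set f : ℝ × ℝ × ℝ → ℂ :=
    fun p => Complex.exp (u * ((p.1 : ℂ) + (p.2.1 : ℂ) - 2 * (p.2.2 : ℂ))) with hfdef
  set S : Set (ℝ × ℝ × ℝ) :=
    {p | -1 < p.1 ∧ p.1 < p.2.1 ∧ p.2.1 < p.2.2 ∧ p.2.2 < 1} with hSdef
  have hfc : Continuous f := by fun_prop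
  have hnf : ∀ p : ℝ × ℝ × ℝ, ‖f p‖ = 1 := by
    intro p
    show ‖Complex.exp (u * ((p.1:ℂ) + (p.2.1:ℂ) - 2*(p.2.2:ℂ)))‖ = 1
    rw [show ((p.1:ℂ) + (p.2.1:ℂ) - 2*(p.2.2:ℂ)) = ((p.1 + p.2.1 - 2*p.2.2 : ℝ) : ℂ) by
      push_cast; ring]
    exact hnorm _
  have hS : MeasurableSet S := by
    have : S = {p : ℝ×ℝ×ℝ | -1 < p.1} ∩ ({p | p.1 < p.2.1} ∩
        ({p | p.2.1 < p.2.2} ∩ {p | p.2.2 < 1})) := by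
      ext p; simp [hSdef, and_assoc]
    rw [this]
    exact (measurableSet_lt measurable_const measurable_fst).inter
      ((measurableSet_lt measurable_fst (measurable_fst.comp measurable_snd)).inter
      ((measurableSet_lt (measurable_fst.comp measurable_snd)
          (measurable_snd.comp measurable_snd)).inter
        (measurableSet_lt (measurable_snd.comp measurable_snd) measurable_const)))
  have hsub : S ⊆ Set.Ioo (-1:ℝ) 1 ×ˢ (Set.Ioo (-1:ℝ) 1 ×ˢ Set.Ioo (-1:ℝ) 1) := by
    rintro ⟨a, b, c⟩ ⟨h1, h2, h3, h4⟩
    exact ⟨⟨h1, by linarith⟩, ⟨by linarith, by linarith⟩, ⟨by linarith, h4⟩⟩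
  have hSfin : volume S < ⊤ := by
    refine lt_of_le_of_lt (measure_mono hsub) ?_
    rw [Measure.volume_eq_prod, Measure.prod_prod, Measure.volume_eq_prod, Measure.prod_prod]
    simp [Real.volume_Ioo]
    finiteness
  have hInt : Integrable (S.indicator f) := by
    rw [integrable_indicator_iff hS]
    refine Integrable.mono' (g := fun _ => (1:ℝ))
      (integrableOn_const hSfin.ne) hfc.aestronglyMeasurable.restrict ?_
    filter_upwards with p
    rw [hnf p]
  set T : ℝ → Set (ℝ × ℝ) := fun a => {q | a < q.1 ∧ q.1 < q.2 ∧ q.2 < 1} with hTdef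
  have hT : ∀ a, MeasurableSet (T a) := by
    intro a
    have : T a = {q : ℝ×ℝ | a < q.1} ∩ ({q | q.1 < q.2} ∩ {q | q.2 < 1}) := by
      ext q; simp [hTdef, and_assoc]
    rw [this]
    exact (measurableSet_lt measurable_const measurable_fst).inter
      ((measurableSet_lt measurable_fst measurable_snd).inter
        (measurableSet_lt measurable_snd measurable_const))
  have hTsub : ∀ a, T a ⊆ Set.Ioo a 1 ×ˢ Set.Ioo a 1 := by
    rintro a ⟨b, c⟩ ⟨h1, h2, h3⟩
    exact ⟨⟨h1, by linarith⟩, ⟨by linarith, h3⟩⟩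
  have hTfin : ∀ a, volume (T a) < ⊤ := by
    intro a
    refine lt_of_le_of_lt (measure_mono (hTsub a)) ?_
    rw [Measure.volume_eq_prod, Measure.prod_prod]
    exact ENNReal.mul_lt_top measure_Ioo_lt_top measure_Ioo_lt_top
  have hIntT : ∀ a : ℝ, Integrable ((T a).indicator (fun q : ℝ × ℝ => f (a, q))) := by
    intro a
    rw [integrable_indicator_iff (hT a)]
    refine Integrable.mono' (g := fun _ => (1:ℝ))
      (integrableOn_const (hTfin a).ne)
      ((hfc.comp (by fun_prop : Continuous (fun q : ℝ × ℝ => ((a, q) : ℝ × ℝ × ℝ)))).aestronglyMeasurable.restrict) ?_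
    filter_upwards with q
    exact le_of_eq (hnf (a, q))
  have step2 : ∀ a : ℝ, (∫ q in T a, f (a, q)) =
      ∫ b in Set.Ioo a 1, ∫ c in Set.Ioo b 1,
        Complex.exp (u * ((a : ℂ) + (b : ℂ) - 2 * (c : ℂ))) := by
    intro a
    rw [← integral_indicator (hT a), Measure.volume_eq_prod,
      integral_prod _ ((Measure.volume_eq_prod ℝ ℝ) ▸ hIntT a),
      ← integral_indicator measurableSet_Ioo]
    congr 1
    funext b
    by_cases hb : b ∈ Set.Ioo a 1
    · rw [Set.indicator_of_mem hb, ← integral_indicator measurableSet_Ioo]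
      congr 1
      funext c
      simp only [Set.indicator_apply, hTdef, Set.mem_setOf_eq, Set.mem_Ioo]
      obtain ⟨hb1, hb2⟩ := hb
      by_cases hc : b < c ∧ c < 1
      · rw [if_pos ⟨hb1, hc⟩, if_pos hc]
      · rw [if_neg (fun h => hc h.2), if_neg hc]
    · have hz : ∀ c : ℝ, (T a).indicator (fun q : ℝ × ℝ => f (a, q)) (b, c) = 0 := by
        intro c
        apply Set.indicator_of_notMem
        simp only [hTdef, Set.mem_setOf_eq]
        rintro ⟨h1, h2, h3⟩
        exact hb ⟨h1, by linarith⟩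
      simp only [hz, Set.indicator_of_notMem hb, integral_zero]
  rw [← integral_indicator hS, Measure.volume_eq_prod,
    integral_prod _ ((Measure.volume_eq_prod ℝ (ℝ × ℝ)) ▸ hInt),
    ← integral_indicator measurableSet_Ioo]
  congr 1
  funext a
  by_cases ha : a ∈ Set.Ioo (-1:ℝ) 1
  · rw [Set.indicator_of_mem ha, ← step2 a, ← integral_indicator (hT a)]
    congr 1
    funext q
    simp only [Set.indicator_apply, hSdef, hTdef, Set.mem_setOf_eq]
    obtain ⟨ha1, ha2⟩ := ha
    by_cases hq : a < q.1 ∧ q.1 < q.2 ∧ q.2 < 1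
    · rw [if_pos ⟨ha1, hq⟩, if_pos hq]
    · rw [if_neg (fun h => hq h.2), if_neg hq]
  · have hz : ∀ q : ℝ × ℝ, S.indicator f (a, q) = 0 := by
      intro q
      apply Set.indicator_of_notMem
      simp only [hSdef, Set.mem_setOf_eq]
      rintro ⟨h1, h2, h3, h4⟩
      exact ha ⟨h1, by linarith⟩
    simp only [hz, Set.indicator_of_notMem ha, integral_zero]
    exact integral_eq_zero_of_ae (Filter.Eventually.of_forall hz)

/-- `F(x) = ∫_{−1<ξ₁<ξ₂<ξ₃<1} e^{2πix(ξ₁+ξ₂−2ξ₃)} dξ`. -/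
noncomputable def F (x : ℝ) : ℂ :=
  ∫ ξ in {p : ℝ × ℝ × ℝ |
      -1 < p.1 ∧ p.1 < p.2.1 ∧ p.2.1 < p.2.2 ∧ p.2.2 < 1},
    Complex.exp ((2 : ℂ) * (Real.pi : ℂ) * Complex.I * (x : ℂ) *
      ((ξ.1 : ℂ) + (ξ.2.1 : ℂ) - 2 * (ξ.2.2 : ℂ)))

lemma F_eq (x : ℝ) (hx : x ≠ 0) :
    F x = 1/((2 : ℂ) * (Real.pi : ℂ) * Complex.I * (x : ℂ))^2 +
      (-3 + 4*Complex.exp (-(2*((2 : ℂ) * (Real.pi : ℂ) * Complex.I * (x : ℂ))))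
        - Complex.exp (-(4*((2 : ℂ) * (Real.pi : ℂ) * Complex.I * (x : ℂ)))))
        /(4*((2 : ℂ) * (Real.pi : ℂ) * Complex.I * (x : ℂ))^3) := by
  set u : ℂ := (2 : ℂ) * (Real.pi : ℂ) * Complex.I * (x : ℂ) with hudef
  have hu : u ≠ 0 := by
    rw [hudef]
    exact mul_ne_zero (mul_ne_zero (mul_ne_zero two_ne_zero
      (Complex.ofReal_ne_zero.2 Real.pi_ne_zero)) Complex.I_ne_zero)
      (Complex.ofReal_ne_zero.2 hx)
  have hnorm : ∀ w : ℝ, ‖Complex.exp (u * w)‖ = 1 := by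
    intro w
    have harg : u * (w:ℂ) = ((2*Real.pi*x*w : ℝ):ℂ) * Complex.I := by
      rw [hudef]; push_cast; ring
    rw [harg, Complex.norm_exp_ofReal_mul_I]
  have h2u : (-(2*u)) ≠ 0 := by simpa using hu
  have hnu : (-u) ≠ 0 := neg_ne_zero.2 hu
  have h2u' : (2*u) ≠ 0 := mul_ne_zero two_ne_zero hu
  have base : F x = ∫ a in Set.Ioo (-1:ℝ) 1, ∫ b in Set.Ioo a 1, ∫ c in Set.Ioo b 1,
      Complex.exp (u * ((a : ℂ) + (b : ℂ) - 2 * (c : ℂ))) := iter u hnorm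
  rw [base]
  have L3 : ∀ a b : ℝ, b ≤ 1 → (∫ c in Set.Ioo b 1, Complex.exp (u * ((a:ℂ)+(b:ℂ)-2*(c:ℂ)))) =
      0 + (Complex.exp (u*(a:ℂ))/(2*u)) * Complex.exp ((-u)*(b:ℂ))
        + (-(Complex.exp (u*(a:ℂ))*Complex.exp (-(2*u)))/(2*u)) * Complex.exp (u*(b:ℂ)) := by
    intro a b hb
    have step : (∫ c in Set.Ioo b 1, Complex.exp (u * ((a:ℂ)+(b:ℂ)-2*(c:ℂ)))) =
        ∫ c in Set.Ioo b 1, Complex.exp (u*((a:ℂ)+(b:ℂ))) * Complex.exp ((-(2*u)) * (c:ℂ)) := by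
      refine setIntegral_congr_fun measurableSet_Ioo (fun c _ => ?_)
      rw [← Complex.exp_add]; congr 1; ring
    rw [step, int_one_exp _ _ h2u hb]
    exact id1 u hu a b
  have L2 : ∀ a : ℝ, a ∈ Set.Ioo (-1:ℝ) 1 →
      (∫ b in Set.Ioo a 1, ∫ c in Set.Ioo b 1, Complex.exp (u * ((a:ℂ)+(b:ℂ)-2*(c:ℂ)))) =
      1/(2*u^2) + (-(Complex.exp (-u))/(u^2)) * Complex.exp (u*(a:ℂ))
        + (Complex.exp (-(2*u))/(2*u^2)) * Complex.exp ((2*u)*(a:ℂ)) := by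
    intro a ha
    have step : (∫ b in Set.Ioo a 1, ∫ c in Set.Ioo b 1,
        Complex.exp (u * ((a:ℂ)+(b:ℂ)-2*(c:ℂ)))) =
        ∫ b in Set.Ioo a 1, ((0:ℂ) + (Complex.exp (u*(a:ℂ))/(2*u)) * Complex.exp ((-u)*(b:ℂ))
          + (-(Complex.exp (u*(a:ℂ))*Complex.exp (-(2*u)))/(2*u)) * Complex.exp (u*(b:ℂ))) := by
      refine setIntegral_congr_fun measurableSet_Ioo (fun b hb => ?_)
      exact L3 a b hb.2.le
    rw [step, int_two_exp _ _ _ _ _ hnu hu ha.2.le]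
    exact id2 u hu a
  have step : (∫ a in Set.Ioo (-1:ℝ) 1, ∫ b in Set.Ioo a 1, ∫ c in Set.Ioo b 1,
      Complex.exp (u * ((a:ℂ)+(b:ℂ)-2*(c:ℂ)))) =
      ∫ a in Set.Ioo (-1:ℝ) 1, ((1:ℂ)/(2*u^2)
        + (-(Complex.exp (-u))/(u^2)) * Complex.exp (u*(a:ℂ))
        + (Complex.exp (-(2*u))/(2*u^2)) * Complex.exp ((2*u)*(a:ℂ))) := by
    refine setIntegral_congr_fun measurableSet_Ioo (fun a ha => ?_)
    exact L2 a ha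
  rw [step, int_two_exp _ _ _ _ _ hu (mul_ne_zero two_ne_zero hu) (by norm_num : (-1:ℝ) ≤ 1)]
  exact id3 u hu

lemma F_lower (x : ℝ) (hx : 1 ≤ |x|) : 1/(128*x^2) ≤ ‖F x‖ := by
  have hx0 : x ≠ 0 := by
    intro h; rw [h] at hx; simp at hx; linarith
  rw [F_eq x hx0]
  set u : ℂ := (2 : ℂ) * (Real.pi : ℂ) * Complex.I * (x : ℂ) with hudef
  have hP3 : (3:ℝ) < Real.pi := Real.pi_gt_three
  have hP4 : Real.pi ≤ 4 := Real.pi_le_four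
  have hnu : ‖u‖ = 2*Real.pi*|x| := by
    rw [hudef]
    simp [norm_mul, Complex.norm_I, Complex.norm_real,
      abs_of_pos Real.pi_pos]
    try ring
  set A : ℂ := 1/u^2 with hA
  set R : ℂ := (-3 + 4*Complex.exp (-(2*u)) - Complex.exp (-(4*u)))/(4*u^3) with hR
  have hnA : ‖A‖ = 1/(2*Real.pi*|x|)^2 := by
    rw [hA, norm_div, norm_one, norm_pow, hnu]
  have hexp1 : ‖Complex.exp (-(2*u))‖ = 1 := by
    rw [show -(2*u) = ((-4*Real.pi*x : ℝ):ℂ) * Complex.I from by rw [hudef]; push_cast; ring,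
      Complex.norm_exp_ofReal_mul_I]
  have hexp2 : ‖Complex.exp (-(4*u))‖ = 1 := by
    rw [show -(4*u) = ((-8*Real.pi*x : ℝ):ℂ) * Complex.I from by rw [hudef]; push_cast; ring,
      Complex.norm_exp_ofReal_mul_I]
  have hnum : ‖(-3 + 4*Complex.exp (-(2*u)) - Complex.exp (-(4*u)) : ℂ)‖ ≤ 8 := by
    calc ‖(-3 + 4*Complex.exp (-(2*u)) - Complex.exp (-(4*u)) : ℂ)‖
        ≤ ‖(-3 + 4*Complex.exp (-(2*u)) : ℂ)‖ + ‖Complex.exp (-(4*u))‖ := norm_sub_le _ _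
      _ ≤ ‖(-3 : ℂ)‖ + ‖(4 : ℂ)*Complex.exp (-(2*u))‖ + ‖Complex.exp (-(4*u))‖ := by
          have := norm_add_le ((-3 : ℂ)) ((4:ℂ)*Complex.exp (-(2*u)))
          linarith
      _ = 3 + 4*1 + 1 := by
          rw [norm_mul, hexp1, hexp2]
          norm_num
      _ = 8 := by norm_num
  have hden : ‖(4*u^3 : ℂ)‖ = 4*(2*Real.pi*|x|)^3 := by
    rw [norm_mul, norm_pow, hnu]
    norm_num
  have hnR : ‖R‖ ≤ 8/(4*(2*Real.pi*|x|)^3) := by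
    rw [hR, norm_div, hden]
    apply div_le_div_of_nonneg_right hnum ?_ |>.trans_eq rfl
    positivity
  have hkey : ‖A‖ - ‖R‖ ≤ ‖A + R‖ := by
    have h := norm_add_le (A + R) (-R)
    simp only [add_neg_cancel_right, norm_neg] at h
    linarith
  refine le_trans ?_ hkey
  have hXsq : x^2 = |x|^2 := (sq_abs x).symm
  rw [hnA, hXsq]
  set X := |x| with hX
  have hX1 : 1 ≤ X := hx
  have hfinal : 1/(128*X^2) ≤ 1/(2*Real.pi*X)^2 - 8/(4*(2*Real.pi*X)^3) := by
    have e1 : (8:ℝ)/(4*(2*Real.pi*X)^3) = 1/(4*Real.pi^3*X^3) := by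
      have : Real.pi ≠ 0 := Real.pi_ne_zero
      have : X ≠ 0 := by positivity
      field_simp; ring
    have e2 : (1:ℝ)/(2*Real.pi*X)^2 = 1/(4*Real.pi^2*X^2) := by
      congr 1; ring
    rw [e1, e2]
    rw [div_sub_div _ _ (by positivity) (by positivity), div_le_div_iff₀ (by positivity) (by positivity)]
    have hXpos : (0:ℝ) < X := by positivity
    nlinarith [mul_nonneg (by nlinarith : (0:ℝ) ≤ 16 - Real.pi^2)
        (by positivity : (0:ℝ) ≤ Real.pi^3*X^5),
      mul_nonneg (by nlinarith : (0:ℝ) ≤ Real.pi*X - 2)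
        (by positivity : (0:ℝ) ≤ Real.pi^2*X^4)]
  exact le_trans hfinal (by linarith [hnR])

/-- For `0 < r ≤ 1/2`, `F ∉ L^r(ℝ)`: `∫ |F|^r = ∞`. -/
theorem F_not_in_Lr (r : ℝ) (hr : 0 < r) (hr' : r ≤ 1/2) :
    ∫⁻ x : ℝ, ENNReal.ofReal (‖F x‖ ^ r) = ⊤ := by
  have hpt : ∀ x : ℝ, x ∈ Set.Ioi (1:ℝ) →
      ENNReal.ofReal (1/(12*x)) ≤ ENNReal.ofReal (‖F x‖ ^ r) := by
    intro x hx
    have hx1 : (1:ℝ) < x := hx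
    have hxpos : (0:ℝ) < x := lt_trans one_pos hx1
    apply ENNReal.ofReal_le_ofReal
    have habs : 1 ≤ |x| := by rw [abs_of_pos hxpos]; linarith
    have hF := F_lower x habs
    have hbpos : (0:ℝ) < 1/(128*x^2) := by positivity
    have hble : (1:ℝ)/(128*x^2) ≤ 1 := by
      rw [div_le_one (by positivity)]; nlinarith
    calc 1/(12*x) ≤ Real.sqrt (1/(128*x^2)) := by
          rw [Real.le_sqrt' (by positivity)]
          rw [div_pow, one_pow]
          exact one_div_le_one_div_of_le (by positivity) (by nlinarith)
      _ = (1/(128*x^2)) ^ ((1:ℝ)/2) := Real.sqrt_eq_rpow _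
      _ ≤ (1/(128*x^2)) ^ r := Real.rpow_le_rpow_of_exponent_ge hbpos hble hr'
      _ ≤ ‖F x‖ ^ r := Real.rpow_le_rpow hbpos.le hF hr.le
  have hdiv : ∫⁻ x in Set.Ioi (1:ℝ), ENNReal.ofReal (1/(12*x)) = ⊤ := by
    by_contra h
    have hmeas : AEStronglyMeasurable (fun x:ℝ => 1/(12*x)) (volume.restrict (Set.Ioi 1)) :=
      (measurable_const.div ((measurable_id'.const_mul 12))).aestronglyMeasurable
    have hnn : 0 ≤ᵐ[volume.restrict (Set.Ioi (1:ℝ))] (fun x:ℝ => 1/(12*x)) := by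
      filter_upwards [ae_restrict_mem measurableSet_Ioi] with x hx
      have hxpos : (0:ℝ) < x := lt_trans one_pos hx
      positivity
    have hInt : Integrable (fun x:ℝ => 1/(12*x)) (volume.restrict (Set.Ioi 1)) :=
      (lintegral_ofReal_ne_top_iff_integrable hmeas hnn).1 h
    have hInt2 : IntegrableOn (fun x:ℝ => x⁻¹) (Set.Ioi (1:ℝ)) := by
      have h12 := hInt.const_mul (12:ℝ)
      refine h12.congr (ae_of_all _ fun x => ?_)
      by_cases hx : x = 0
      · simp [hx]
      · field_simp
    have hInt3 : IntegrableOn (fun x:ℝ => x ^ (-1:ℝ)) (Set.Ioi (1:ℝ)) := by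
      refine hInt2.congr ?_
      filter_upwards [ae_restrict_mem measurableSet_Ioi] with x hx
      rw [Real.rpow_neg (le_of_lt (lt_trans one_pos hx)), Real.rpow_one]
    rw [integrableOn_Ioi_rpow_iff zero_lt_one] at hInt3
    norm_num at hInt3
  refine top_unique ?_
  calc (⊤:ENNReal) = ∫⁻ x in Set.Ioi (1:ℝ), ENNReal.ofReal (1/(12*x)) := hdiv.symm
    _ ≤ (∫⁻ x in Set.Ioi (1:ℝ), ENNReal.ofReal (‖F x‖ ^ r)) := by
        refine lintegral_mono_ae ?_
        filter_upwards [ae_restrict_mem measurableSet_Ioi] with x hx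
        exact hpt x hx
    _ ≤ (∫⁻ x : ℝ, ENNReal.ofReal (‖F x‖ ^ r)) := lintegral_mono' Measure.restrict_le_self le_rfl
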